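/- Let E ⊆ ℝ² be a bounded open set with 0 < vol(E) < ∞, let γ > 0, let q_1, …, q_n ∈ ℝ² (n ≥ 1), q̄ := (1/n) Σ q_i, and let α ∈ ℝ. For sufficiently regular u, v define the Virtual Element bilinear form ã^E(u,v) := a^E(π_C u, π_C v) + α Σ_{i=1}^n (u − π_P u)(q_i) · (v − π_P v)(q_i), where π_R u := (1/n) Σ_i u(q_i), π_C u(x) := ⟨∇u⟩·(x − q̄) and π_P u := π_R u + π_C u. Then ã^E is polynomially consistent: for every affine function p(x) = a + ⟨b, x⟩ and every v : ℝ² → ℝ continuously differentiable on a neighborhood of closure(E), one has ã^E(p, v) = a^E(p, v). In particular π_P p = p for every affine p. -/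

import Mathlib

open MeasureTheory

noncomputable section

/-- The local energy bilinear form `a^E(u, v) = γ ∫_E ⟨∇u, ∇v⟩ dx` on a planar
element `E`. -/
def aE (E : Set (EuclideanSpace ℝ (Fin 2))) (γ : ℝ)
    (u v : EuclideanSpace ℝ (Fin 2) → ℝ) : ℝ :=
  γ * ∫ x in E, (inner ℝ (gradient u x) (gradient v x) : ℝ)

/-- The mean gradient `⟨∇v⟩ = (1/vol E) ∫_E ∇v dx`. -/
def meanGrad (E : Set (EuclideanSpace ℝ (Fin 2)))
    (v : EuclideanSpace ℝ (Fin 2) → ℝ) : EuclideanSpace ℝ (Fin 2) :=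
  (volume E).toReal⁻¹ • ∫ x in E, gradient v x

/-- The projection `π_C v (x) = ⟨∇v⟩ · (x - q̄)` onto zero-mean affine functions. -/
def piC (E : Set (EuclideanSpace ℝ (Fin 2))) (qbar : EuclideanSpace ℝ (Fin 2))
    (v : EuclideanSpace ℝ (Fin 2) → ℝ) : EuclideanSpace ℝ (Fin 2) → ℝ :=
  fun x => (inner ℝ (meanGrad E v) (x - qbar) : ℝ)

/-- The vertex-average projection `π_R v = (1/n) ∑ v(q_i)` onto constants. -/
def piR (n : ℕ) (q : Fin n → EuclideanSpace ℝ (Fin 2))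
    (v : EuclideanSpace ℝ (Fin 2) → ℝ) : ℝ :=
  (n : ℝ)⁻¹ * ∑ i, v (q i)

/-- The projection `π_P v = π_R v + π_C v` onto affine functions, the base point being
the vertex average `q̄ = (1/n) ∑ q_i`. -/
def piP (E : Set (EuclideanSpace ℝ (Fin 2))) (n : ℕ)
    (q : Fin n → EuclideanSpace ℝ (Fin 2))
    (v : EuclideanSpace ℝ (Fin 2) → ℝ) : EuclideanSpace ℝ (Fin 2) → ℝ :=
  fun x => piR n q v + piC E ((n : ℝ)⁻¹ • ∑ i, q i) v x

/-- The stabilized Virtual Element bilinear form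
`ã^E(u,v) = a^E(π_C u, π_C v) + α ∑_i (u - π_P u)(q_i) (v - π_P v)(q_i)`. -/
def atildeE (E : Set (EuclideanSpace ℝ (Fin 2))) (γ α : ℝ) (n : ℕ)
    (q : Fin n → EuclideanSpace ℝ (Fin 2))
    (u v : EuclideanSpace ℝ (Fin 2) → ℝ) : ℝ :=
  aE E γ (piC E ((n : ℝ)⁻¹ • ∑ i, q i) u) (piC E ((n : ℝ)⁻¹ • ∑ i, q i) v)
    + α * ∑ i, (u (q i) - piP E n q u (q i)) * (v (q i) - piP E n q v (q i))


lemma grad_affine (b : EuclideanSpace ℝ (Fin 2)) (a : ℝ) (x : EuclideanSpace ℝ (Fin 2)) :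
    HasGradientAt (fun y => a + (inner ℝ b y : ℝ)) b x := by
  rw [hasGradientAt_iff_hasFDerivAt]
  have : ((InnerProductSpace.toDual ℝ (EuclideanSpace ℝ (Fin 2))) b :
      EuclideanSpace ℝ (Fin 2) →L[ℝ] ℝ) = innerSL ℝ b := by
    ext y; simp [InnerProductSpace.toDual_apply_apply]
  rw [this]
  exact (innerSL ℝ b).hasFDerivAt.const_add a

lemma gradient_affine (b : EuclideanSpace ℝ (Fin 2)) (a : ℝ) (x : EuclideanSpace ℝ (Fin 2)) :
    gradient (fun y => a + (inner ℝ b y : ℝ)) x = b :=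
  (grad_affine b a x).gradient

lemma grad_sub (b c : EuclideanSpace ℝ (Fin 2)) (x : EuclideanSpace ℝ (Fin 2)) :
    gradient (fun y => (inner ℝ b (y - c) : ℝ)) x = b := by
  have : (fun y : EuclideanSpace ℝ (Fin 2) => (inner ℝ b (y - c) : ℝ))
      = fun y => (-(inner ℝ b c : ℝ)) + (inner ℝ b y : ℝ) := by
    funext y; rw [inner_sub_right]; ring
  rw [this]; exact gradient_affine b _ x

/-- Polynomial consistency (the "patch test") of the stabilized Virtual Element
bilinear form: `ã^E(p, v) = a^E(p, v)` for every affine `p`; in particular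
`π_P p = p` for every affine `p`. -/
theorem stmt18
    (E : Set (EuclideanSpace ℝ (Fin 2))) (hEo : IsOpen E)
    (hEb : Bornology.IsBounded E) (hEpos : 0 < volume E)
    (γ : ℝ) (hγ : 0 < γ)
    (n : ℕ) (hn : 1 ≤ n) (q : Fin n → EuclideanSpace ℝ (Fin 2))
    (α : ℝ)
    (v : EuclideanSpace ℝ (Fin 2) → ℝ)
    (U : Set (EuclideanSpace ℝ (Fin 2))) (hU : IsOpen U) (hEU : closure E ⊆ U)
    (hv : ContDiffOn ℝ 1 v U) :
    (∀ (a : ℝ) (b : EuclideanSpace ℝ (Fin 2)),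
      atildeE E γ α n q (fun x => a + (inner ℝ b x : ℝ)) v
        = aE E γ (fun x => a + (inner ℝ b x : ℝ)) v) ∧
    (∀ (a : ℝ) (b x : EuclideanSpace ℝ (Fin 2)),
      piP E n q (fun y => a + (inner ℝ b y : ℝ)) x = a + (inner ℝ b x : ℝ)) := by
  have hn0 : (n : ℝ) ≠ 0 := Nat.cast_ne_zero.mpr (Nat.one_le_iff_ne_zero.mp hn)
  have hfin : volume E < ⊤ := hEb.measure_lt_top
  have hvol : (0 : ℝ) < (volume E).toReal :=
    ENNReal.toReal_pos hEpos.ne' hfin.ne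
  have hvol0 : (volume E).toReal ≠ 0 := hvol.ne'
  set qbar : EuclideanSpace ℝ (Fin 2) := (n : ℝ)⁻¹ • ∑ i, q i with hqbar
  -- mean gradient of an affine function
  have hmg : ∀ (a : ℝ) (b : EuclideanSpace ℝ (Fin 2)),
      meanGrad E (fun y => a + (inner ℝ b y : ℝ)) = b := by
    intro a b
    unfold meanGrad
    have : (fun x => gradient (fun y => a + (inner ℝ b y : ℝ)) x) = fun _ => b := by
      funext x; exact gradient_affine b a x
    rw [show (∫ x in E, gradient (fun y => a + (inner ℝ b y : ℝ)) x)
        = ∫ _ in E, b from by rw [this]]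
    rw [setIntegral_const, measureReal_def, smul_smul, inv_mul_cancel₀ hvol0, one_smul]
  -- the projection identity
  have hpiP : ∀ (a : ℝ) (b x : EuclideanSpace ℝ (Fin 2)),
      piP E n q (fun y => a + (inner ℝ b y : ℝ)) x = a + (inner ℝ b x : ℝ) := by
    intro a b x
    unfold piP piR piC
    rw [hmg a b]
    have hs : (∑ i, (a + (inner ℝ b (q i) : ℝ)))
        = n * a + (inner ℝ b (∑ i, q i) : ℝ) := by
      rw [Finset.sum_add_distrib, inner_sum]
      simp [mul_comm]
    rw [hs, inner_sub_right, ← hqbar, hqbar, real_inner_smul_right]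
    field_simp
    ring
  refine ⟨?_, hpiP⟩
  intro a b
  -- integrability of the gradient of v on E
  have hint : IntegrableOn (gradient v) E volume := by
    have hcont : ContinuousOn (gradient v) U := by
      have h1 : ContinuousOn (fderiv ℝ v) U :=
        hv.continuousOn_fderiv_of_isOpen hU le_rfl
      have h2 : gradient v = fun x =>
          (InnerProductSpace.toDual ℝ (EuclideanSpace ℝ (Fin 2))).symm (fderiv ℝ v x) := rfl
      rw [h2]
      exact (LinearIsometryEquiv.continuous _).comp_continuousOn h1
    have hK : IsCompact (closure E) :=
      Metric.isCompact_of_isClosed_isBounded isClosed_closure hEb.closure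
    exact ((hcont.mono hEU).integrableOn_compact hK).mono_set subset_closure
  have hswap : (inner ℝ b (∫ x in E, gradient v x) : ℝ)
      = ∫ x in E, (inner ℝ b (gradient v x) : ℝ) := (integral_inner hint b).symm
  unfold atildeE
  rw [← hqbar]
  -- stabilization term vanishes
  have hzero : ∀ i : Fin n,
      ((fun y => a + (inner ℝ b y : ℝ)) (q i)
        - piP E n q (fun y => a + (inner ℝ b y : ℝ)) (q i)) = 0 := by
    intro i; rw [hpiP a b (q i)]; ring
  have hsum : (∑ i, ((fun y => a + (inner ℝ b y : ℝ)) (q i)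
        - piP E n q (fun y => a + (inner ℝ b y : ℝ)) (q i))
      * (v (q i) - piP E n q v (q i))) = 0 := by
    apply Finset.sum_eq_zero; intro i _; rw [hzero i, zero_mul]
  rw [hsum, mul_zero, add_zero]
  -- the consistency of the bilinear part
  unfold aE
  congr 1
  have hgl : ∀ x, gradient (piC E qbar (fun y => a + (inner ℝ b y : ℝ))) x = b := by
    intro x
    unfold piC
    rw [hmg a b]
    exact grad_sub b qbar x
  have hgr : ∀ x, gradient (piC E qbar v) x = meanGrad E v := by
    intro x
    unfold piC
    exact grad_sub (meanGrad E v) qbar x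
  have hgp : ∀ x, gradient (fun y => a + (inner ℝ b y : ℝ)) x = b :=
    gradient_affine b a
  calc (∫ x in E, (inner ℝ (gradient (piC E qbar (fun y => a + (inner ℝ b y : ℝ))) x)
          (gradient (piC E qbar v) x) : ℝ))
      = ∫ _ in E, (inner ℝ b (meanGrad E v) : ℝ) := by
        apply setIntegral_congr_fun hEo.measurableSet
        intro x _
        simp only [hgl, hgr]
    _ = (volume E).toReal • (inner ℝ b (meanGrad E v) : ℝ) := setIntegral_const _
    _ = ∫ x in E, (inner ℝ b (gradient v x) : ℝ) := by
        unfold meanGrad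
        rw [real_inner_smul_right, smul_eq_mul]
        rw [← hswap]
        field_simp
    _ = ∫ x in E, (inner ℝ (gradient (fun y => a + (inner ℝ b y : ℝ)) x)
          (gradient v x) : ℝ) := by
        apply setIntegral_congr_fun hEo.measurableSet
        intro x _
        simp only [hgp]
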